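/- Let X, ξ be square-integrable with X ∈ ℝ^m, ξ ∈ ℝ, let G̃ ∈ ℝ^m be a zero-mean square-integrable random vector independent of (X, ξ), let f ∈ ℝ^m satisfy fᵀG̃ = 0 almost surely, and set Y = fᵀX + ξ. Assume E[(X+G̃)(X+G̃)ᵀ] is invertible. Then the population OLS coefficient of Y on X + G̃ equals f + (E[XXᵀ] + E[G̃G̃ᵀ])^{-1} E[Xξ]. -/

import Mathlib

open Matrix MeasureTheory ProbabilityTheory

private lemma memL2_integrable_mul {Ω : Type*} [MeasurableSpace Ω] {μ : Measure Ω}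
    {f g : Ω → ℝ} (hf : MemLp f 2 μ) (hg : MemLp g 2 μ) :
    Integrable (fun ω => f ω * g ω) μ := by
  have h : MemLp (f • g) 1 μ := hg.smul hf (hpqr := ENNReal.holderConjugate_iff.mpr ENNReal.inv_two_add_inv_two)
  have := memLp_one_iff_integrable.mp h
  exact this

/-- Population OLS on outcome-invariantly augmented data `X + G̃` (with `fᵀG̃ = 0` a.s.,
`G̃` zero mean and independent of `(X, ξ)`, `Y = fᵀX + ξ`) has coefficient
`f + (E[XXᵀ] + E[G̃G̃ᵀ])⁻¹ E[Xξ]`. -/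
theorem da_ols_bias {Ω : Type*} [MeasurableSpace Ω] (μ : Measure Ω)
    [IsProbabilityMeasure μ] (m : ℕ) (X G : Ω → Fin m → ℝ) (ξ : Ω → ℝ)
    (hX2 : ∀ i, MemLp (fun ω => X ω i) 2 μ) (hG2 : ∀ i, MemLp (fun ω => G ω i) 2 μ)
    (hξ2 : MemLp ξ 2 μ)
    (hGmean : ∀ i, ∫ ω, G ω i ∂μ = 0)
    (hindep : IndepFun (fun ω => (X ω, ξ ω)) G μ)
    (f : Fin m → ℝ) (hfG : ∀ᵐ ω ∂μ, f ⬝ᵥ G ω = 0)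
    (Y : Ω → ℝ) (hY : ∀ ω, Y ω = f ⬝ᵥ X ω + ξ ω)
    (SigX SigG B : Matrix (Fin m) (Fin m) ℝ)
    (hSigX : SigX = Matrix.of fun i j => ∫ ω, X ω i * X ω j ∂μ)
    (hSigG : SigG = Matrix.of fun i j => ∫ ω, G ω i * G ω j ∂μ)
    (hB : B = Matrix.of fun i j => ∫ ω, (X ω i + G ω i) * (X ω j + G ω j) ∂μ)
    (hBinv : IsUnit B) :
    B⁻¹ *ᵥ (fun i => ∫ ω, (X ω i + G ω i) * Y ω ∂μ)
      = f + (SigX + SigG)⁻¹ *ᵥ (fun i => ∫ ω, X ω i * ξ ω ∂μ) := by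
  have one_le_two : (1 : ENNReal) ≤ 2 := by norm_num
  have hXint : ∀ i, Integrable (fun ω => X ω i) μ := fun i => (hX2 i).integrable one_le_two
  have hGint : ∀ i, Integrable (fun ω => G ω i) μ := fun i => (hG2 i).integrable one_le_two
  have hξint : Integrable ξ μ := hξ2.integrable one_le_two
  have hXX : ∀ i j, Integrable (fun ω => X ω i * X ω j) μ := fun i j =>
    memL2_integrable_mul (hX2 i) (hX2 j)
  have hXG : ∀ i j, Integrable (fun ω => X ω i * G ω j) μ := fun i j =>
    memL2_integrable_mul (hX2 i) (hG2 j)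
  have hGX : ∀ i j, Integrable (fun ω => G ω i * X ω j) μ := fun i j =>
    memL2_integrable_mul (hG2 i) (hX2 j)
  have hGG : ∀ i j, Integrable (fun ω => G ω i * G ω j) μ := fun i j =>
    memL2_integrable_mul (hG2 i) (hG2 j)
  have hXξ : ∀ i, Integrable (fun ω => X ω i * ξ ω) μ := fun i =>
    memL2_integrable_mul (hX2 i) hξ2
  have hGξ : ∀ i, Integrable (fun ω => G ω i * ξ ω) μ := fun i =>
    memL2_integrable_mul (hG2 i) hξ2
  -- independence consequences
  have indXG : ∀ i j, IndepFun (fun ω => X ω i) (fun ω => G ω j) μ := fun i j =>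
    hindep.comp ((measurable_pi_apply i).comp measurable_fst) (measurable_pi_apply j)
  have indξG : ∀ j, IndepFun ξ (fun ω => G ω j) μ := fun j =>
    hindep.comp measurable_snd (measurable_pi_apply j)
  have hXGzero : ∀ i j, ∫ ω, X ω i * G ω j ∂μ = 0 := by
    intro i j
    have := (indXG i j).integral_mul_eq_mul_integral (hXint i).aestronglyMeasurable (hGint j).aestronglyMeasurable
    simpa [Pi.mul_apply, hGmean j] using this
  have hGXzero : ∀ i j, ∫ ω, G ω i * X ω j ∂μ = 0 := by
    intro i j
    have h := hXGzero j i
    rw [show (fun ω => G ω i * X ω j) = fun ω => X ω j * G ω i from by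
      funext ω; ring]
    exact h
  have hGξzero : ∀ i, ∫ ω, G ω i * ξ ω ∂μ = 0 := by
    intro i
    have := (indξG i).integral_mul_eq_mul_integral hξint.aestronglyMeasurable (hGint i).aestronglyMeasurable
    rw [show (fun ω => G ω i * ξ ω) = fun ω => ξ ω * G ω i from by funext ω; ring]
    simpa [Pi.mul_apply, hGmean i] using this
  -- B = SigX + SigG
  have hBsum : B = SigX + SigG := by
    subst hB hSigX hSigG
    ext i j
    simp only [Matrix.add_apply, Matrix.of_apply]
    have h1 : Integrable (fun ω => X ω i * G ω j + (G ω i * X ω j + G ω i * G ω j)) μ := by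
      exact (hXG i j).add ((hGX i j).add (hGG i j))
    have h2 : Integrable (fun ω => G ω i * X ω j + G ω i * G ω j) μ := by
      exact (hGX i j).add (hGG i j)
    have heq : (fun ω => (X ω i + G ω i) * (X ω j + G ω j))
        = fun ω => X ω i * X ω j + (X ω i * G ω j + (G ω i * X ω j + G ω i * G ω j)) := by
      funext ω; ring
    rw [heq, integral_add (hXX i j) h1, integral_add (hXG i j) h2,
      integral_add (hGX i j) (hGG i j), hXGzero, hGXzero]
    ring
  -- key vector identity
  have hvec : (fun i => ∫ ω, (X ω i + G ω i) * Y ω ∂μ)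
      = B *ᵥ f + (fun i => ∫ ω, X ω i * ξ ω ∂μ) := by
    funext i
    have hterm : ∀ j, Integrable (fun ω => f j * ((X ω i + G ω i) * (X ω j + G ω j))) μ := by
      intro j
      exact (memL2_integrable_mul ((hX2 i).add (hG2 i)) ((hX2 j).add (hG2 j))).const_mul _
    have hsumint : Integrable (fun ω => ∑ j, f j * ((X ω i + G ω i) * (X ω j + G ω j))) μ :=
      integrable_finset_sum _ fun j _ => hterm j
    have hξpart : Integrable (fun ω => X ω i * ξ ω + G ω i * ξ ω) μ := by
      exact (hXξ i).add (hGξ i)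
    have hae : (fun ω => (X ω i + G ω i) * Y ω)
        =ᵐ[μ] fun ω => (∑ j, f j * ((X ω i + G ω i) * (X ω j + G ω j)))
          + (X ω i * ξ ω + G ω i * ξ ω) := by
      filter_upwards [hfG] with ω hω
      have hfXG : f ⬝ᵥ X ω = ∑ j, f j * (X ω j + G ω j) := by
        have h : f ⬝ᵥ (fun j => X ω j + G ω j) = f ⬝ᵥ X ω + f ⬝ᵥ G ω := by
          simp [dotProduct, Finset.sum_add_distrib, mul_add]
        rw [show (∑ j, f j * (X ω j + G ω j)) = f ⬝ᵥ (fun j => X ω j + G ω j) from rfl,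
          h, hω, add_zero]
      rw [hY ω, hfXG, mul_add, Finset.mul_sum, add_mul]
      congr 1
      exact Finset.sum_congr rfl fun j _ => by ring
    rw [integral_congr_ae hae, integral_add hsumint hξpart,
      integral_add (hXξ i) (hGξ i), hGξzero, add_zero,
      integral_finset_sum _ fun j _ => hterm j]
    simp only [integral_const_mul]
    congr 1
    rw [hB]
    simp [Matrix.mulVec, dotProduct, mul_comm]
  rw [hvec, Matrix.mulVec_add, Matrix.mulVec_mulVec,
    Matrix.nonsing_inv_mul B ((Matrix.isUnit_iff_isUnit_det B).mp hBinv),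
    Matrix.one_mulVec, hBsum]
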